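/- For every constant κ > 0, there exists a joint distribution of four random variables (A, B, C, D) on finite sets such that I(C:D) > I(C:D|A) + I(C:D|B) + κ·(I(A:B) + I(A:B|C)). -/

import Mathlib

open scoped BigOperators Classical

noncomputable section

/-- `p` is a probability mass function on the finite type `Ω`. -/
def IsPMF {Ω : Type*} [Fintype Ω] (p : Ω → ℝ) : Prop :=
  (∀ ω, 0 ≤ p ω) ∧ ∑ ω, p ω = 1

/-- Probability of the event `X = s` under `p`. -/
def prOf {Ω S : Type*} [Fintype Ω] [DecidableEq S] (p : Ω → ℝ) (X : Ω → S) (s : S) : ℝ :=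
  ∑ ω ∈ Finset.univ.filter (fun ω => X ω = s), p ω

/-- Shannon entropy (in bits) of the random variable `X` under the pmf `p`. -/
def ent {Ω S : Type*} [Fintype Ω] [Fintype S] [DecidableEq S] (p : Ω → ℝ) (X : Ω → S) : ℝ :=
  - ∑ s : S, prOf p X s * Real.logb 2 (prOf p X s)

/-- Mutual information `I(X:Y) = H(X) + H(Y) - H(X,Y)`. -/
def mi {Ω S T : Type*} [Fintype Ω] [Fintype S] [Fintype T] [DecidableEq S] [DecidableEq T]
    (p : Ω → ℝ) (X : Ω → S) (Y : Ω → T) : ℝ :=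
  ent p X + ent p Y - ent p (fun ω => (X ω, Y ω))

/-- Conditional mutual information `I(X:Y|Z) = H(X,Z) + H(Y,Z) - H(X,Y,Z) - H(Z)`. -/
def cmi {Ω S T U : Type*} [Fintype Ω] [Fintype S] [Fintype T] [Fintype U]
    [DecidableEq S] [DecidableEq T] [DecidableEq U]
    (p : Ω → ℝ) (X : Ω → S) (Y : Ω → T) (Z : Ω → U) : ℝ :=
  ent p (fun ω => (X ω, Z ω)) + ent p (fun ω => (Y ω, Z ω))
    - ent p (fun ω => (X ω, Y ω, Z ω)) - ent p Z

/-- Conditional entropy `H(X|Y) = H(X,Y) - H(Y)`. -/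
def condEnt {Ω S T : Type*} [Fintype Ω] [Fintype S] [Fintype T] [DecidableEq S] [DecidableEq T]
    (p : Ω → ℝ) (X : Ω → S) (Y : Ω → T) : ℝ :=
  ent p (fun ω => (X ω, Y ω)) - ent p Y

/-- The four coordinate random variables on `Bool × Bool × Bool × Bool`. -/
def vA : Bool × Bool × Bool × Bool → Bool := fun ω => ω.1
def vB : Bool × Bool × Bool × Bool → Bool := fun ω => ω.2.1
def vC : Bool × Bool × Bool × Bool → Bool := fun ω => ω.2.2.1
def vD : Bool × Bool × Bool × Bool → Bool := fun ω => ω.2.2.2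

/-! ### Auxiliary material for the proof -/
open Filter Topology Set

/-- The witness distribution, with a parameter `ε`. -/
def wit (ε : ℝ) : Bool × Bool × Bool × Bool → ℝ := fun ω =>
  if ω = (false,false,false,true) then (1-ε)/4
  else if ω = (false,true,false,false) then (1-ε)/4
  else if ω = (true,false,false,true) then (1-ε)/4
  else if ω = (true,true,false,true) then (1-ε)/4
  else if ω = (true,false,true,true) then ε
  else 0

/-- `h x = -x log₂ x`. -/
def hh (x : ℝ) : ℝ := -(x * Real.logb 2 x)

lemma hasDerivAt_hh {x : ℝ} (hx : x ≠ 0) :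
    HasDerivAt hh (-((Real.log x + 1) / Real.log 2)) x := by
  have h1 : HasDerivAt (fun y : ℝ => y * Real.log y) (Real.log x + 1) x := by
    have := (hasDerivAt_id x).mul (Real.hasDerivAt_log hx)
    simpa [mul_inv_cancel₀ hx, add_comm, Pi.mul_def] using this
  have h2 := (h1.div_const (Real.log 2)).neg
  have he : hh = fun y : ℝ => -(y * Real.log y / Real.log 2) := by
    funext y; simp [hh, Real.logb, mul_div_assoc]
  rw [he]; exact h2

lemma term_deriv (a b : ℝ) (ha : a ≠ 0) :
    HasDerivAt (fun ε : ℝ => hh (a + b * ε)) (-((Real.log a + 1) / Real.log 2) * b) 0 := by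
  have inner : HasDerivAt (fun ε : ℝ => a + b * ε) b 0 := by
    simpa using ((hasDerivAt_id (0:ℝ)).const_mul b).const_add a
  have outer := hasDerivAt_hh (x := a + b * 0) (by simpa using ha)
  have := outer.comp 0 inner
  simpa [Function.comp_def] using this

/-- The gap `I(C:D) - I(C:D|A) - I(C:D|B) - κ(I(A:B)+I(A:B|C))` in closed form. -/
def FF (κ ε : ℝ) : ℝ :=
  hh (1 + (-1)*ε) + hh (3/4 + (1/4)*ε) - hh (3/4 + (-3/4)*ε)
    - κ * (6 * hh (1/2 + (-1/2)*ε) + 2 * hh (1/2 + (1/2)*ε) - 7 * hh (1/4 + (-1/4)*ε)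
      - hh (1/4 + (3/4)*ε) - hh (1 + (-1)*ε))

lemma logb_four : Real.logb 2 4 = 2 := by
  have hlog2 : Real.log 2 ≠ 0 := ne_of_gt (Real.log_pos (by norm_num))
  rw [show (4:ℝ) = 2^2 by norm_num, Real.logb, Real.log_pow]
  field_simp
  norm_num

lemma logb_half : Real.logb 2 (1/2) = -1 := by
  rw [one_div, Real.logb_inv, Real.logb_self_eq_one] <;> norm_num

lemma logb_quarter : Real.logb 2 (1/4) = -2 := by
  rw [one_div, Real.logb_inv, logb_four]

lemma FF_zero (κ : ℝ) : FF κ 0 = 0 := by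
  simp [FF, hh, logb_half, logb_quarter]
  ring_nf
  norm_num [logb_four]

lemma FF_deriv (κ : ℝ) :
    HasDerivAt (fun ε => FF κ ε) (Real.log (4/3) / Real.log 2) 0 := by
  have t1 := term_deriv 1 (-1) one_ne_zero
  have t2 := term_deriv (3/4) (1/4) (by norm_num)
  have t3 := term_deriv (3/4) (-3/4) (by norm_num)
  have t4 := term_deriv (1/2) (-1/2) (by norm_num)
  have t5 := term_deriv (1/2) (1/2) (by norm_num)
  have t6 := term_deriv (1/4) (-1/4) (by norm_num)
  have t7 := term_deriv (1/4) (3/4) (by norm_num)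
  have big := ((t1.add t2).sub t3).sub
    ((((((t4.const_mul 6).add (t5.const_mul 2)).sub (t6.const_mul 7)).sub t7).sub t1).const_mul κ)
  have hlog2 : Real.log 2 ≠ 0 := ne_of_gt (Real.log_pos (by norm_num))
  have l34 : Real.log (3/4) = Real.log 3 - 2 * Real.log 2 := by
    rw [Real.log_div (by norm_num) (by norm_num),
      show (4:ℝ) = 2^2 by norm_num, Real.log_pow]; push_cast; ring
  have l12 : Real.log (1/2) = -Real.log 2 := by rw [one_div, Real.log_inv]
  have l14 : Real.log (1/4) = -(2 * Real.log 2) := by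
    rw [one_div, Real.log_inv, show (4:ℝ) = 2^2 by norm_num, Real.log_pow]; push_cast; ring
  have l43 : Real.log (4/3) = 2 * Real.log 2 - Real.log 3 := by
    rw [Real.log_div (by norm_num) (by norm_num),
      show (4:ℝ) = 2^2 by norm_num, Real.log_pow]; push_cast; ring
  refine big.congr_deriv ?_
  rw [l34, l12, l14, l43, Real.log_one]
  field_simp
  ring

lemma key_identity (κ ε : ℝ) :
    mi (wit ε) vC vD - (cmi (wit ε) vC vD vA + cmi (wit ε) vC vD vB
      + κ * (mi (wit ε) vA vB + cmi (wit ε) vA vB vC)) = FF κ ε := by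
  simp only [mi, cmi, ent, prOf, Finset.sum_filter]
  simp only [mi, cmi, ent, prOf, vA, vB, vC, vD, wit, FF, hh,
    Fintype.sum_prod_type, Fintype.sum_bool, Finset.sum_filter]
  norm_num
  ring_nf

lemma exists_good_eps (κ : ℝ) : ∃ ε : ℝ, 0 < ε ∧ ε < 1 ∧ 0 < FF κ ε := by
  have hL : 0 < Real.log (4/3) / Real.log 2 :=
    div_pos (Real.log_pos (by norm_num)) (Real.log_pos (by norm_num))
  have hslope := (hasDerivAt_iff_tendsto_slope.mp (FF_deriv κ))
  have hsub : 𝓝[>] (0:ℝ) ≤ 𝓝[≠] (0:ℝ) :=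
    nhdsWithin_mono 0 (fun x hx => ne_of_gt hx)
  have hslope' := hslope.mono_left hsub
  have h1 : ∀ᶠ ε in 𝓝[>] (0:ℝ), 0 < slope (fun ε => FF κ ε) 0 ε :=
    hslope'.eventually (eventually_gt_nhds hL)
  have h2 : ∀ᶠ ε in 𝓝[>] (0:ℝ), ε < 1 := by
    filter_upwards [Ioo_mem_nhdsGT_of_mem (a := (1:ℝ)) (b := 0) (c := 0)
      ⟨le_refl 0, by norm_num⟩] with x hx
    exact hx.2
  have h3 : ∀ᶠ ε in 𝓝[>] (0:ℝ), 0 < ε := eventually_mem_nhdsWithin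
  obtain ⟨ε, hs, hlt, hpos⟩ := (h1.and (h2.and h3)).exists
  refine ⟨ε, hpos, hlt, ?_⟩
  have heq : slope (fun ε => FF κ ε) 0 ε = FF κ ε / ε := by
    simp [slope, FF_zero, div_eq_inv_mul]
  rw [heq] at hs
  have h4 := mul_pos hs hpos
  rwa [div_mul_cancel₀ _ (ne_of_gt hpos)] at h4

theorem zy_essentially_conditional (κ : ℝ) (hκ : 0 < κ) :
    ∃ p : Bool × Bool × Bool × Bool → ℝ, IsPMF p ∧
      cmi p vC vD vA + cmi p vC vD vB + κ * (mi p vA vB + cmi p vA vB vC)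
        < mi p vC vD := by
  obtain ⟨ε, hε0, hε1, hF⟩ := exists_good_eps κ
  refine ⟨wit ε, ⟨?_, ?_⟩, ?_⟩
  · intro ω
    simp only [wit]
    split_ifs <;> linarith
  · simp only [wit, Fintype.sum_prod_type, Fintype.sum_bool]
    norm_num
    ring
  · have := key_identity κ ε
    linarith

end
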